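/- Let c₁ > 0, t ≥ 1, and let h : [0,t] → ℝ be C² with h''(k) ≥ c₁ t ⟨k⟩^{-3} for all k ∈ [0,t]. Define H(k) = ∫₀^k e^{ih(s)} ds. Then there is a constant c > 0 depending only on c₁ such that |H(k)| ≤ c t^{-1/2} ⟨k⟩^{3/2} for all k ∈ [0,t]. -/

import Mathlib

open Set intervalIntegral Complex

/-- complexification of a within-derivative -/
lemma hdw_ofReal {f : ℝ → ℝ} {f' x : ℝ} {s : Set ℝ} (hf : HasDerivWithinAt f f' s x) :
    HasDerivWithinAt (fun y => ((f y : ℂ))) (f' : ℂ) s x := by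
  exact hf.ofReal_comp

/-- FTC within Icc -/
lemma ftc_icc {a b : ℝ} (hab : a ≤ b) {f f' : ℝ → ℝ}
    (hf : ∀ x ∈ Icc a b, HasDerivWithinAt f (f' x) (Icc a b) x)
    (hint : IntervalIntegrable f' MeasureTheory.volume a b) :
    ∫ y in a..b, f' y = f b - f a :=
  integral_eq_sub_of_hasDeriv_right_of_le hab (fun x hx => (hf x hx).continuousWithinAt)
    (fun x hx => (((hf x ⟨hx.1.le, hx.2.le⟩).hasDerivAt
      (Icc_mem_nhds hx.1 hx.2)).hasDerivWithinAt)) hint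

/-- van der Corput, first derivative test with monotone phase derivative -/
lemma vdc1 {a b δ : ℝ} (hab : a ≤ b) (hδ : 0 < δ) {h φ ψ : ℝ → ℝ}
    (hh : ∀ s ∈ Icc a b, HasDerivWithinAt h (φ s) (Icc a b) s)
    (hφ : ∀ s ∈ Icc a b, HasDerivWithinAt φ (ψ s) (Icc a b) s)
    (hψc : ContinuousOn ψ (Icc a b))
    (hψ0 : ∀ s ∈ Icc a b, 0 ≤ ψ s)
    (hsep : (∀ s ∈ Icc a b, δ ≤ φ s) ∨ (∀ s ∈ Icc a b, φ s ≤ -δ)) :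
    ‖∫ s in a..b, Complex.exp (Complex.I * (h s : ℂ))‖ ≤ 3 / δ := by
  have hφne : ∀ s ∈ Icc a b, φ s ≠ 0 := by
    intro s hs
    rcases hsep with hc | hc
    · exact (lt_of_lt_of_le hδ (hc s hs)).ne'
    · exact (lt_of_le_of_lt (hc s hs) (by linarith)).ne
  have hφabs : ∀ s ∈ Icc a b, δ ≤ |φ s| := by
    intro s hs
    rcases hsep with hc | hc
    · exact le_trans (hc s hs) (le_abs_self _)
    · have h1 := hc s hs
      calc δ ≤ -φ s := by linarith
      _ ≤ |φ s| := neg_le_abs _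
  -- main objects
  set U : ℝ → ℂ := fun s => (Complex.I * (φ s : ℂ))⁻¹ with hU
  set V : ℝ → ℂ := fun s => Complex.exp (Complex.I * (h s : ℂ)) with hV
  set U' : ℝ → ℂ := fun s => -(Complex.I * (ψ s : ℂ)) / (Complex.I * (φ s : ℂ)) ^ 2 with hU'
  set V' : ℝ → ℂ := fun s => Complex.exp (Complex.I * (h s : ℂ)) * (Complex.I * (φ s : ℂ)) with hV'
  have hIφne : ∀ s ∈ Icc a b, (Complex.I * (φ s : ℂ)) ≠ 0 := by
    intro s hs
    simp [Complex.I_ne_zero, Complex.ofReal_eq_zero, hφne s hs]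
  have hUd : ∀ s ∈ Icc a b, HasDerivWithinAt U (U' s) (Icc a b) s := by
    intro s hs
    have h1 : HasDerivWithinAt (fun y => Complex.I * ((φ y : ℝ) : ℂ)) (Complex.I * (ψ s : ℂ))
        (Icc a b) s := (hdw_ofReal (hφ s hs)).const_mul Complex.I
    have h2 := (hasDerivAt_inv (hIφne s hs)).comp_hasDerivWithinAt s h1
    simp only [hU, hU']
    convert h2 using 1
    all_goals first | rfl | field_simp
  have hVd : ∀ s ∈ Icc a b, HasDerivWithinAt V (V' s) (Icc a b) s := by
    intro s hs
    exact ((hdw_ofReal (hh s hs)).const_mul Complex.I).cexp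
  -- continuity facts
  have hφc : ContinuousOn φ (Icc a b) := fun s hs => (hφ s hs).continuousWithinAt
  have hhc : ContinuousOn h (Icc a b) := fun s hs => (hh s hs).continuousWithinAt
  have hIφc : ContinuousOn (fun s => Complex.I * (φ s : ℂ)) (Icc a b) :=
    continuousOn_const.mul (Complex.continuous_ofReal.comp_continuousOn hφc)
  have hVc : ContinuousOn V (Icc a b) :=
    Complex.continuous_exp.comp_continuousOn
      (continuousOn_const.mul (Complex.continuous_ofReal.comp_continuousOn hhc))
  have hU'c : ContinuousOn U' (Icc a b) := by
    apply ContinuousOn.div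
    · exact (continuousOn_const.mul (Complex.continuous_ofReal.comp_continuousOn hψc)).neg
    · exact hIφc.pow 2
    · intro s hs; exact pow_ne_zero 2 (hIφne s hs)
  have hV'c : ContinuousOn V' (Icc a b) := hVc.mul hIφc
  have hU'int : IntervalIntegrable U' MeasureTheory.volume a b := by
    rw [show Icc a b = uIcc a b from (uIcc_of_le hab).symm] at hU'c
    exact hU'c.intervalIntegrable
  have hV'int : IntervalIntegrable V' MeasureTheory.volume a b := by
    rw [show Icc a b = uIcc a b from (uIcc_of_le hab).symm] at hV'c
    exact hV'c.intervalIntegrable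
  -- integration by parts
  have key : ∫ s in a..b, U s * V' s
      = U b * V b - U a * V a - ∫ s in a..b, U' s * V s := by
    apply integral_mul_deriv_eq_deriv_mul_of_hasDerivWithinAt
    · intro x hx; rw [uIcc_of_le hab] at *; exact hUd x hx
    · intro x hx; rw [uIcc_of_le hab] at *; exact hVd x hx
    · exact hU'int
    · exact hV'int
  have habmem : a ∈ Icc a b := ⟨le_refl a, hab⟩
  have hbbmem : b ∈ Icc a b := ⟨hab, le_refl b⟩
  have hcongr : (∫ s in a..b, Complex.exp (Complex.I * (h s : ℂ))) = ∫ s in a..b, U s * V' s := by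
    apply integral_congr
    intro s hs
    rw [uIcc_of_le hab] at hs
    simp only [hU, hV']
    rw [mul_comm (Complex.exp _) _, ← mul_assoc, inv_mul_cancel₀ (hIφne s hs), one_mul]
  -- norm computations
  have hnU : ∀ s ∈ Icc a b, ‖U s‖ ≤ 1 / δ := by
    intro s hs
    simp only [hU, norm_inv, norm_mul, Complex.norm_I, Complex.norm_real, Real.norm_eq_abs,
      one_mul]
    rw [one_div]
    exact inv_anti₀ hδ (hφabs s hs)
  have hnV : ∀ s, ‖V s‖ = 1 := by
    intro s
    simp only [hV, Complex.norm_exp]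
    norm_num [Complex.mul_re]
  have hnU'V : ∀ s ∈ Icc a b, ‖U' s * V s‖ = ψ s / φ s ^ 2 := by
    intro s hs
    rw [norm_mul, hnV, mul_one]
    simp only [hU', norm_div, norm_neg, norm_mul, norm_pow, Complex.norm_I,
      Complex.norm_real, Real.norm_eq_abs, one_mul, one_pow]
    rw [_root_.abs_of_nonneg (hψ0 s hs), _root_.sq_abs]
  -- the integral of ψ/φ²
  have hftc : ∫ s in a..b, ψ s / φ s ^ 2 = (φ a)⁻¹ - (φ b)⁻¹ := by
    have hd : ∀ x ∈ Icc a b, HasDerivWithinAt (fun s => -(φ s)⁻¹) (ψ x / φ x ^ 2) (Icc a b) x := by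
      intro x hx
      have := ((hφ x hx).inv (hφne x hx)).neg
      rwa [show -(-ψ x / φ x ^ 2) = ψ x / φ x ^ 2 by ring] at this
    have hintc : IntervalIntegrable (fun s => ψ s / φ s ^ 2) MeasureTheory.volume a b := by
      have : ContinuousOn (fun s => ψ s / φ s ^ 2) (Icc a b) :=
        hψc.div (hφc.pow 2) (fun s hs => pow_ne_zero 2 (hφne s hs))
      rw [show Icc a b = uIcc a b from (uIcc_of_le hab).symm] at this
      exact this.intervalIntegrable
    rw [ftc_icc hab hd hintc]
    ring
  have hftcle : (φ a)⁻¹ - (φ b)⁻¹ ≤ 1 / δ := by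
    rcases hsep with hc | hc
    · have h1 : δ ≤ φ a := hc a habmem
      have h2 : δ ≤ φ b := hc b hbbmem
      have : (φ a)⁻¹ ≤ δ⁻¹ := inv_anti₀ hδ h1
      have : (0:ℝ) < (φ b)⁻¹ := inv_pos.2 (lt_of_lt_of_le hδ h2)
      rw [one_div]; linarith [inv_anti₀ hδ h1]
    · have h1 : φ a ≤ -δ := hc a habmem
      have h2 : φ b ≤ -δ := hc b hbbmem
      have ha' : (φ a)⁻¹ < 0 := inv_neg''.2 (by linarith)
      have hb' : -(φ b)⁻¹ ≤ δ⁻¹ := by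
        rw [← inv_neg]
        exact inv_anti₀ hδ (by linarith)
      rw [one_div]; linarith
  -- put it together
  rw [hcongr, key]
  have hbound : ‖∫ s in a..b, U' s * V s‖ ≤ 1 / δ := by
    calc ‖∫ s in a..b, U' s * V s‖ ≤ ∫ s in a..b, ‖U' s * V s‖ :=
          norm_integral_le_integral_norm hab
      _ = ∫ s in a..b, ψ s / φ s ^ 2 := by
          apply integral_congr
          intro s hs
          rw [uIcc_of_le hab] at hs
          exact hnU'V s hs
      _ = (φ a)⁻¹ - (φ b)⁻¹ := hftc
      _ ≤ 1 / δ := hftcle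
  calc ‖U b * V b - U a * V a - ∫ s in a..b, U' s * V s‖
      ≤ ‖U b * V b - U a * V a‖ + ‖∫ s in a..b, U' s * V s‖ := norm_sub_le _ _
    _ ≤ (‖U b * V b‖ + ‖U a * V a‖) + ‖∫ s in a..b, U' s * V s‖ := by
        gcongr; exact norm_sub_le _ _
    _ ≤ (1 / δ + 1 / δ) + 1 / δ := by
        gcongr
        · rw [norm_mul, hnV, mul_one]; exact hnU b hbbmem
        · rw [norm_mul, hnV, mul_one]; exact hnU a habmem
    _ = 3 / δ := by ring

/-- quantitative mean value inequality from below -/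
lemma mvt_aux {a b lam : ℝ} {φ ψ : ℝ → ℝ}
    (hφ : ∀ s ∈ Icc a b, HasDerivWithinAt φ (ψ s) (Icc a b) s)
    (hψ : ∀ s ∈ Icc a b, lam ≤ ψ s) {p q : ℝ}
    (hp : p ∈ Icc a b) (hq : q ∈ Icc a b) (hpq : p ≤ q) :
    lam * (q - p) ≤ φ q - φ p := by
  set g : ℝ → ℝ := fun s => φ s - lam * s with hg
  have hgd : ∀ x ∈ Ioo a b, HasDerivAt g (ψ x - lam) x := by
    intro x hx
    have h1 : HasDerivAt φ (ψ x) x :=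
      (hφ x ⟨hx.1.le, hx.2.le⟩).hasDerivAt (Icc_mem_nhds hx.1 hx.2)
    convert h1.sub (((hasDerivAt_id x).const_mul lam)) using 1 <;> first | rfl | ring
  have hmono : MonotoneOn g (Icc a b) := by
    apply monotoneOn_of_deriv_nonneg (convex_Icc a b)
    · exact fun x hx => ((hφ x hx).continuousWithinAt.sub
        ((continuous_const.mul continuous_id).continuousAt.continuousWithinAt))
    · intro x hx
      rw [interior_Icc] at hx
      exact (hgd x hx).differentiableAt.differentiableWithinAt
    · intro x hx
      rw [interior_Icc] at hx
      rw [(hgd x hx).deriv]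
      have := hψ x ⟨hx.1.le, hx.2.le⟩
      linarith
  have := hmono hp hq hpq
  simp only [hg] at this
  nlinarith

/-- van der Corput, second derivative test -/
lemma vdc2 {a b lam : ℝ} (hab : a ≤ b) (hlam : 0 < lam) {h φ ψ : ℝ → ℝ}
    (hh : ∀ s ∈ Icc a b, HasDerivWithinAt h (φ s) (Icc a b) s)
    (hφ : ∀ s ∈ Icc a b, HasDerivWithinAt φ (ψ s) (Icc a b) s)
    (hψc : ContinuousOn ψ (Icc a b))
    (hψ : ∀ s ∈ Icc a b, lam ≤ ψ s) :
    ‖∫ s in a..b, Complex.exp (Complex.I * (h s : ℂ))‖ ≤ 8 / Real.sqrt lam := by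
  set δ := Real.sqrt lam with hδdef
  have hδ : 0 < δ := Real.sqrt_pos.2 hlam
  have hδsq : δ ^ 2 = lam := Real.sq_sqrt hlam.le
  have hψ0 : ∀ s ∈ Icc a b, 0 ≤ ψ s := fun s hs => le_trans hlam.le (hψ s hs)
  have hφc : ContinuousOn φ (Icc a b) := fun s hs => (hφ s hs).continuousWithinAt
  have hhc : ContinuousOn h (Icc a b) := fun s hs => (hh s hs).continuousWithinAt
  have hmono : MonotoneOn φ (Icc a b) := by
    intro p hp q hq hpq
    nlinarith [mvt_aux hφ hψ hp hq hpq]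
  have habm : a ∈ Icc a b := ⟨le_refl a, hab⟩
  have hbbm : b ∈ Icc a b := ⟨hab, le_refl b⟩
  -- restriction to subintervals
  have hsub : ∀ {p q : ℝ}, p ∈ Icc a b → q ∈ Icc a b → Icc p q ⊆ Icc a b :=
    fun hp hq => Icc_subset_Icc hp.1 hq.2
  have hvdc1 : ∀ p q : ℝ, p ∈ Icc a b → q ∈ Icc a b → p ≤ q →
      ((∀ s ∈ Icc p q, δ ≤ φ s) ∨ (∀ s ∈ Icc p q, φ s ≤ -δ)) →
      ‖∫ s in p..q, Complex.exp (Complex.I * (h s : ℂ))‖ ≤ 3 / δ := by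
    intro p q hp hq hpq hsep
    exact vdc1 hpq hδ
      (fun s hs => (hh s (hsub hp hq hs)).mono (hsub hp hq))
      (fun s hs => (hφ s (hsub hp hq hs)).mono (hsub hp hq))
      (hψc.mono (hsub hp hq)) (fun s hs => hψ0 s (hsub hp hq hs)) hsep
  -- integrability of the integrand on subintervals
  have hVc : ContinuousOn (fun s => Complex.exp (Complex.I * (h s : ℂ))) (Icc a b) :=
    Complex.continuous_exp.comp_continuousOn
      (continuousOn_const.mul (Complex.continuous_ofReal.comp_continuousOn hhc))
  have hint : ∀ p q : ℝ, p ∈ Icc a b → q ∈ Icc a b → p ≤ q →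
      IntervalIntegrable (fun s => Complex.exp (Complex.I * (h s : ℂ)))
        MeasureTheory.volume p q := by
    intro p q hp hq hpq
    have := hVc.mono (hsub hp hq)
    rw [show Icc p q = uIcc p q from (uIcc_of_le hpq).symm] at this
    exact this.intervalIntegrable
  by_cases h1 : δ ≤ φ a
  · have : ∀ s ∈ Icc a b, δ ≤ φ s := fun s hs => le_trans h1 (hmono habm hs hs.1)
    calc ‖∫ s in a..b, Complex.exp (Complex.I * (h s : ℂ))‖ ≤ 3 / δ :=
          hvdc1 a b habm hbbm hab (Or.inl fun s hs => this s hs)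
      _ ≤ 8 / δ := by gcongr <;> norm_num
  by_cases h2 : φ b ≤ -δ
  · have : ∀ s ∈ Icc a b, φ s ≤ -δ := fun s hs => le_trans (hmono hs hbbm hs.2) h2
    calc ‖∫ s in a..b, Complex.exp (Complex.I * (h s : ℂ))‖ ≤ 3 / δ :=
          hvdc1 a b habm hbbm hab (Or.inr fun s hs => this s hs)
      _ ≤ 8 / δ := by gcongr <;> norm_num
  push_neg at h1 h2
  -- construct p
  obtain ⟨p, hpm, hφplb, hpalt, hIap⟩ :
      ∃ p ∈ Icc a b, -δ ≤ φ p ∧ (φ p ≤ -δ ∨ p = a) ∧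
        ‖∫ s in a..p, Complex.exp (Complex.I * (h s : ℂ))‖ ≤ 3 / δ := by
    by_cases hpa : φ a ≤ -δ
    · obtain ⟨p, hpm, hφp⟩ := intermediate_value_Icc hab hφc
        (show -δ ∈ Icc (φ a) (φ b) from ⟨hpa, h2.le⟩)
      refine ⟨p, hpm, hφp.ge, Or.inl hφp.le, ?_⟩
      apply hvdc1 a p habm hpm hpm.1
      exact Or.inr fun s hs => (hmono (hsub habm hpm hs) hpm hs.2).trans hφp.le
    · push_neg at hpa
      exact ⟨a, habm, hpa.le, Or.inr rfl, by simp [div_nonneg, hδ.le]⟩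
  -- construct q
  obtain ⟨q, hqm, hφqub, hqalt, hIqb⟩ :
      ∃ q ∈ Icc a b, φ q ≤ δ ∧ (δ ≤ φ q ∨ q = b) ∧
        ‖∫ s in q..b, Complex.exp (Complex.I * (h s : ℂ))‖ ≤ 3 / δ := by
    by_cases hqb : δ ≤ φ b
    · obtain ⟨q, hqm, hφq⟩ := intermediate_value_Icc hab hφc
        (show δ ∈ Icc (φ a) (φ b) from ⟨h1.le, hqb⟩)
      refine ⟨q, hqm, hφq.le, Or.inl hφq.ge, ?_⟩
      apply hvdc1 q b hqm hbbm hqm.2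
      exact Or.inl fun s hs => hφq.ge.trans (hmono hqm (hsub hqm hbbm hs) hs.1)
    · push_neg at hqb
      exact ⟨b, hbbm, hqb.le, Or.inr rfl, by simp [div_nonneg, hδ.le]⟩
  have hpq : p ≤ q := by
    by_contra hc
    push_neg at hc
    rcases hpalt with hp' | rfl
    · rcases hqalt with hq' | rfl
      · have := hmono hqm hpm hc.le
        linarith
      · linarith [hpm.2]
    · linarith [hqm.1]
  -- middle bound
  have hmid : ‖∫ s in p..q, Complex.exp (Complex.I * (h s : ℂ))‖ ≤ 2 / δ := by
    have hlen : q - p ≤ 2 * δ / lam := by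
      have := mvt_aux hφ hψ hpm hqm hpq
      rw [le_div_iff₀ hlam]
      nlinarith
    calc ‖∫ s in p..q, Complex.exp (Complex.I * (h s : ℂ))‖ ≤ 1 * |q - p| := by
          apply norm_integral_le_of_norm_le_const
          intro x hx
          simp only [Complex.norm_exp]
          norm_num [Complex.mul_re]
      _ = q - p := by rw [one_mul, _root_.abs_of_nonneg (by linarith : (0:ℝ) ≤ q - p)]
      _ ≤ 2 * δ / lam := hlen
      _ = 2 / δ := by
          rw [← hδsq]; field_simp
  -- combine
  have hsplit : (∫ s in a..b, Complex.exp (Complex.I * (h s : ℂ)))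
      = (∫ s in a..p, Complex.exp (Complex.I * (h s : ℂ)))
      + (∫ s in p..q, Complex.exp (Complex.I * (h s : ℂ)))
      + (∫ s in q..b, Complex.exp (Complex.I * (h s : ℂ))) := by
    rw [integral_add_adjacent_intervals (hint a p habm hpm hpm.1) (hint p q hpm hqm hpq),
      integral_add_adjacent_intervals
        (IntervalIntegrable.trans (hint a p habm hpm hpm.1) (hint p q hpm hqm hpq))
        (hint q b hqm hbbm hqm.2)]
  rw [hsplit]
  calc ‖_ + _ + _‖ ≤ ‖(∫ s in a..p, Complex.exp (Complex.I * (h s : ℂ)))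
        + (∫ s in p..q, Complex.exp (Complex.I * (h s : ℂ)))‖
        + ‖∫ s in q..b, Complex.exp (Complex.I * (h s : ℂ))‖ := norm_add_le _ _
    _ ≤ ‖∫ s in a..p, Complex.exp (Complex.I * (h s : ℂ))‖
        + ‖∫ s in p..q, Complex.exp (Complex.I * (h s : ℂ))‖
        + ‖∫ s in q..b, Complex.exp (Complex.I * (h s : ℂ))‖ := by
          gcongr; exact norm_add_le _ _
    _ ≤ 3 / δ + 2 / δ + 3 / δ := by gcongr
    _ = 8 / δ := by ring

/-- Lemma 6.6: van der Corput-type bound for the primitive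
H(k) = ∫₀^k e^{ih(s)} ds of an oscillatory exponential whose phase satisfies
h''(k) ≥ c₁ t ⟨k⟩^{-3} on [0,t]. -/
theorem stmt_8 (c₁ : ℝ) (hc₁ : 0 < c₁) :
    ∃ c : ℝ, 0 < c ∧
      ∀ t : ℝ, 1 ≤ t →
      ∀ h : ℝ → ℝ, ContDiffOn ℝ 2 h (Set.Icc 0 t) →
        (∀ k ∈ Set.Icc (0 : ℝ) t,
          c₁ * t / Real.sqrt (1 + k ^ 2) ^ 3 ≤
            iteratedDerivWithin 2 h (Set.Icc 0 t) k) →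
        ∀ k ∈ Set.Icc (0 : ℝ) t,
          ‖∫ s in (0 : ℝ)..k, Complex.exp (Complex.I * (h s : ℂ))‖ ≤
            c / Real.sqrt t * Real.sqrt (1 + k ^ 2) ^ ((3 : ℝ) / 2) := by
  refine ⟨8 / Real.sqrt c₁, by positivity, ?_⟩
  intro t ht h hC hder k hk
  have ht0 : (0:ℝ) < t := lt_of_lt_of_le one_pos ht
  set I : Set ℝ := Set.Icc (0:ℝ) t with hI
  have hud : UniqueDiffOn ℝ I := uniqueDiffOn_Icc ht0
  set φ : ℝ → ℝ := derivWithin h I with hφdef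
  set ψ : ℝ → ℝ := iteratedDerivWithin 2 h I with hψdef
  have hh : ∀ s ∈ I, HasDerivWithinAt h (φ s) I s := fun s hs =>
    ((hC.differentiableOn (by norm_num)) s hs).hasDerivWithinAt
  have hφcd : ContDiffOn ℝ 1 φ I := hC.derivWithin hud (by norm_num)
  have hφd : ∀ s ∈ I, HasDerivWithinAt φ (ψ s) I s := by
    intro s hs
    have hdiff := ((hφcd.differentiableOn (by norm_num)) s hs).hasDerivWithinAt
    have e1 : ψ s = derivWithin φ I s := by
      rw [hψdef, iteratedDerivWithin_succ]
      exact derivWithin_congr (fun y hy => congrFun iteratedDerivWithin_one y)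
        (congrFun iteratedDerivWithin_one s)
    rwa [← e1] at hdiff
  have hψcont : ContinuousOn ψ I := hC.continuousOn_iteratedDerivWithin (le_refl 2) hud
  obtain ⟨hk0, hkt⟩ := hk
  set x : ℝ := Real.sqrt (1 + k ^ 2) with hxdef
  have hx : 0 < x := Real.sqrt_pos.2 (by positivity)
  set lam : ℝ := c₁ * t / x ^ 3 with hlamdef
  have hlam : 0 < lam := by positivity
  have hsubI : Set.Icc (0:ℝ) k ⊆ I := Set.Icc_subset_Icc le_rfl hkt
  have hψlb : ∀ s ∈ Set.Icc (0:ℝ) k, lam ≤ ψ s := by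
    intro s hs
    refine le_trans ?_ (hder s (hsubI hs))
    have hsk : Real.sqrt (1 + s ^ 2) ≤ x := Real.sqrt_le_sqrt (by nlinarith [hs.1, hs.2])
    have hs0 : 0 < Real.sqrt (1 + s ^ 2) := Real.sqrt_pos.2 (by positivity)
    show c₁ * t / x ^ 3 ≤ c₁ * t / Real.sqrt (1 + s ^ 2) ^ 3
    gcongr
  have hmain := vdc2 hk0 hlam (fun s hs => (hh s (hsubI hs)).mono hsubI)
    (fun s hs => (hφd s (hsubI hs)).mono hsubI) (hψcont.mono hsubI) hψlb
  refine le_trans hmain (le_of_eq ?_)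
  have hx32 : Real.sqrt (x ^ 3) = x ^ ((3:ℝ)/2) := by
    rw [Real.sqrt_eq_rpow, ← Real.rpow_natCast x 3, ← Real.rpow_mul hx.le]
    norm_num
  have hsqlam : Real.sqrt lam = (Real.sqrt c₁ * Real.sqrt t) / x ^ ((3:ℝ)/2) := by
    rw [hlamdef, Real.sqrt_div (by positivity : (0:ℝ) ≤ c₁ * t), Real.sqrt_mul hc₁.le, hx32]
  rw [hsqlam]
  have h1 : Real.sqrt c₁ ≠ 0 := (Real.sqrt_pos.2 hc₁).ne'
  have h2 : Real.sqrt t ≠ 0 := (Real.sqrt_pos.2 ht0).ne'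
  have h3 : x ^ ((3:ℝ)/2) ≠ 0 := (Real.rpow_pos_of_pos hx _).ne'
  field_simp
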